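/- Let C > 0, σ₀ > 0, λ₀ > 0 and let q be the associated function. Then for all 0 ≤ t ≤ T and all λ with 0 < λ < λ₀: ∫_t^T e^{−λ(T−s)}·q(s−t) ds ≤ (e^{−λ(T−t)}·e^{λ/(2λ₀)}/(√π·C·σ₀))·(1/√λ₀ + √λ₀/(λ₀ − λ)). -/

import Mathlib

noncomputable section

/-- The function `q = q^{κ,lam₀,σ₀}`: `q(t) = 1/(√(2πt)·C·σ₀)` for `t < 1/(2lam₀)` and
`q(t) = (√(lam₀e)/(√π·C·σ₀))·e^{−lam₀ t}` for `t ≥ 1/(2lam₀)`. -/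
def qfun (C σ₀ lam₀ : ℝ) (t : ℝ) : ℝ :=
  if t < 1 / (2 * lam₀) then 1 / (Real.sqrt (2 * Real.pi * t) * C * σ₀)
  else Real.sqrt (lam₀ * Real.exp 1) / (Real.sqrt Real.pi * C * σ₀) * Real.exp (-lam₀ * t)

open MeasureTheory intervalIntegral

lemma aux_exp_integral (c a b : ℝ) (hc : c ≠ 0) :
    ∫ x in a..b, Real.exp (c * x) = (Real.exp (c * b) - Real.exp (c * a)) / c := by
  have h : ∀ x ∈ Set.uIcc a b, HasDerivAt (fun y => Real.exp (c * y) / c) (Real.exp (c * x)) x := by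
    intro x _
    have h1 : HasDerivAt (fun y : ℝ => c * y) c x := by simpa using (hasDerivAt_id x).const_mul c
    have h3 := ((Real.hasDerivAt_exp (c * x)).comp x h1).div_const c
    simpa [mul_div_assoc, div_self hc] using h3
  have hint : IntervalIntegrable (fun x => Real.exp (c * x)) volume a b :=
    (Real.continuous_exp.comp (continuous_const.mul continuous_id)).intervalIntegrable a b
  rw [intervalIntegral.integral_eq_sub_of_hasDerivAt h hint]
  ring

lemma pieceA (C σ₀ lam₀ lam : ℝ) (hC : 0 < C) (hσ₀ : 0 < σ₀) (hlam₀ : 0 < lam₀) :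
    ∫ u in (0:ℝ)..(1/(2*lam₀)),
      Real.exp (lam * (1/(2*lam₀))) * (1/(Real.sqrt (2*Real.pi) * C * σ₀) * u ^ (-(1/2) : ℝ))
      = Real.exp (lam/(2*lam₀)) / (Real.sqrt Real.pi * C * σ₀) * (1/Real.sqrt lam₀) := by
  rw [intervalIntegral.integral_const_mul, intervalIntegral.integral_const_mul,
    integral_rpow (Or.inl (by norm_num)), mul_one_div]
  have h0 : ((0:ℝ) ^ ((-(1/2):ℝ)+1)) = 0 := Real.zero_rpow (by norm_num)
  have ha : ((1/(2*lam₀)) ^ ((-(1/2):ℝ)+1)) = Real.sqrt (1/(2*lam₀)) := by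
    rw [Real.sqrt_eq_rpow]; norm_num
  rw [h0, ha]
  have e1 : Real.sqrt (2*Real.pi) = Real.sqrt 2 * Real.sqrt Real.pi :=
    Real.sqrt_mul (by norm_num) _
  have e2 : Real.sqrt (1/(2*lam₀)) = (Real.sqrt 2 * Real.sqrt lam₀)⁻¹ := by
    rw [one_div, Real.sqrt_inv, Real.sqrt_mul (by norm_num)]
  rw [e1, e2]
  have hπ : 0 < Real.sqrt Real.pi := Real.sqrt_pos.mpr Real.pi_pos
  have hl : 0 < Real.sqrt lam₀ := Real.sqrt_pos.mpr hlam₀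
  have hs2 : 0 < Real.sqrt 2 := Real.sqrt_pos.mpr (by norm_num)
  field_simp
  ring_nf
  rw [Real.sq_sqrt (by norm_num : (0:ℝ) ≤ 2)]

lemma pieceB (C σ₀ lam₀ lam τ : ℝ) (hC : 0 < C) (hσ₀ : 0 < σ₀) (hlam₀ : 0 < lam₀)
    (hlam : lam < lam₀) (hτ : 1/(2*lam₀) ≤ τ) :
    ∫ u in (1/(2*lam₀))..τ, Real.exp (lam*u) * qfun C σ₀ lam₀ u ≤
      Real.exp (lam/(2*lam₀)) / (Real.sqrt Real.pi * C * σ₀) * (Real.sqrt lam₀/(lam₀-lam)) := by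
  set a := 1/(2*lam₀) with ha
  set K := Real.sqrt (lam₀ * Real.exp 1) / (Real.sqrt Real.pi * C * σ₀) with hK
  have hcongr : ∫ u in a..τ, Real.exp (lam*u) * qfun C σ₀ lam₀ u
      = ∫ u in a..τ, K * Real.exp ((lam - lam₀) * u) := by
    apply intervalIntegral.integral_congr
    intro u hu
    rw [Set.uIcc_of_le hτ] at hu
    have h1 : ¬ (u < a) := not_lt.mpr hu.1
    simp only [qfun, ← ha, h1, if_false, ← hK]
    rw [show (lam - lam₀) * u = lam * u + -lam₀ * u by ring, Real.exp_add]
    ring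
  rw [hcongr, intervalIntegral.integral_const_mul,
    aux_exp_integral _ _ _ (by intro h; nlinarith : lam - lam₀ ≠ 0)]
  have hKpos : 0 < K := by
    apply div_pos (Real.sqrt_pos.mpr (by positivity)) (by positivity)
  have hd : 0 < lam₀ - lam := by linarith
  have hswap : (Real.exp ((lam-lam₀)*τ) - Real.exp ((lam-lam₀)*a)) / (lam-lam₀)
      = (Real.exp ((lam-lam₀)*a) - Real.exp ((lam-lam₀)*τ)) / (lam₀-lam) := by
    rw [div_eq_div_iff (by linarith) (by linarith)]; ring
  rw [hswap]
  have hstep : K * ((Real.exp ((lam-lam₀)*a) - Real.exp ((lam-lam₀)*τ)) / (lam₀-lam))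
      ≤ K * (Real.exp ((lam-lam₀)*a) / (lam₀-lam)) := by
    gcongr
    linarith [Real.exp_pos ((lam-lam₀)*τ)]
  refine hstep.trans (le_of_eq ?_)
  have e1 : Real.sqrt (lam₀ * Real.exp 1) = Real.sqrt lam₀ * Real.exp 2⁻¹ := by
    rw [Real.sqrt_mul hlam₀.le]
    congr 1
    rw [show Real.exp 1 = Real.exp 2⁻¹ * Real.exp 2⁻¹ by rw [← Real.exp_add]; norm_num,
      Real.sqrt_mul_self (Real.exp_pos (2:ℝ)⁻¹).le]
  have e2 : Real.exp (2⁻¹ : ℝ) * Real.exp ((lam-lam₀) * a) = Real.exp (lam/(2*lam₀)) := by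
    rw [← Real.exp_add]; congr 1; rw [ha]; field_simp; ring
  rw [hK, e1, ← e2]
  ring

/-- `∫_t^T e^{−λ(T−s)} q(s−t) ds ≤ (e^{−λ(T−t)} e^{λ/(2λ₀)}/(√π C σ₀))(1/√λ₀ + √λ₀/(λ₀−λ))`. -/
theorem stmt12 (C σ₀ lam₀ : ℝ) (hC : 0 < C) (hσ₀ : 0 < σ₀) (hlam₀ : 0 < lam₀)
    (t T lam : ℝ) (ht : 0 ≤ t) (htT : t ≤ T) (hlam0 : 0 < lam) (hlam : lam < lam₀) :
    ∫ s in t..T, Real.exp (-lam * (T - s)) * qfun C σ₀ lam₀ (s - t) ≤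
      Real.exp (-lam * (T - t)) * Real.exp (lam / (2 * lam₀)) /
          (Real.sqrt Real.pi * C * σ₀) *
        (1 / Real.sqrt lam₀ + Real.sqrt lam₀ / (lam₀ - lam)) := by
  have hapos : (0:ℝ) < 1/(2*lam₀) := by positivity
  have hτ0 : (0:ℝ) ≤ T - t := by linarith
  have hkpos : (0:ℝ) < 1/(Real.sqrt (2*Real.pi) * C * σ₀) := by
    have : 0 < Real.sqrt (2*Real.pi) := Real.sqrt_pos.mpr (by positivity)
    positivity
  -- pointwise identity for qfun on (0, a)
  have hq : ∀ u : ℝ, 0 < u → u < 1/(2*lam₀) →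
      qfun C σ₀ lam₀ u = 1/(Real.sqrt (2*Real.pi) * C * σ₀) * u ^ (-(1/2) : ℝ) := by
    intro u hu1 hu2
    simp only [qfun, if_pos hu2]
    rw [Real.sqrt_mul (by positivity) u, Real.rpow_neg hu1.le, ← Real.sqrt_eq_rpow]
    have hsu : 0 < Real.sqrt u := Real.sqrt_pos.mpr hu1
    have h2π : 0 < Real.sqrt (2*Real.pi) := Real.sqrt_pos.mpr (by positivity)
    field_simp
  have hne : ∀ᵐ u : ℝ, u ≠ 1/(2*lam₀) := by
    rw [MeasureTheory.ae_iff]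
    simp only [ne_eq, not_not]
    simpa [Set.setOf_eq_eq_singleton] using measure_singleton (α := ℝ) (1/(2*lam₀))
  -- integrability of the comparison function g
  have hint_g : ∀ b : ℝ, IntervalIntegrable
      (fun u => Real.exp (lam * (1/(2*lam₀))) *
        (1/(Real.sqrt (2*Real.pi) * C * σ₀) * u ^ (-(1/2) : ℝ))) volume 0 b := by
    intro b
    exact ((intervalIntegral.intervalIntegrable_rpow' (by norm_num)).const_mul
      _).const_mul _
  -- integrability of f on [0, b] for b ≤ a
  have hint_f : ∀ b : ℝ, 0 ≤ b → b ≤ 1/(2*lam₀) → IntervalIntegrable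
      (fun u => Real.exp (lam * u) * qfun C σ₀ lam₀ u) volume 0 b := by
    intro b hb0 hba
    have base : IntervalIntegrable
        (fun u : ℝ => Real.exp (lam * u) *
          (1/(Real.sqrt (2*Real.pi) * C * σ₀) * u ^ (-(1/2) : ℝ))) volume 0 b :=
      ((intervalIntegral.intervalIntegrable_rpow' (by norm_num)).const_mul
        _).continuousOn_mul
        (Real.continuous_exp.comp (continuous_const.mul continuous_id)).continuousOn
    refine base.congr_ae ?_
    filter_upwards [(MeasureTheory.ae_mono Measure.restrict_le_self) hne,
      MeasureTheory.ae_restrict_mem measurableSet_uIoc] with u hu hmem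
    rw [Set.uIoc_of_le hb0] at hmem
    have h2 : u < 1/(2*lam₀) := lt_of_le_of_ne (hmem.2.trans hba) hu
    rw [hq u hmem.1 h2]
  -- pointwise a.e. bound f ≤ g on [0, b] for b ≤ a
  have hle : ∀ b : ℝ, b ≤ 1/(2*lam₀) →
      (fun u => Real.exp (lam * u) * qfun C σ₀ lam₀ u) ≤ᵐ[volume.restrict (Set.Icc 0 b)]
      (fun u => Real.exp (lam * (1/(2*lam₀))) *
        (1/(Real.sqrt (2*Real.pi) * C * σ₀) * u ^ (-(1/2) : ℝ))) := by
    intro b hba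
    filter_upwards [(MeasureTheory.ae_mono Measure.restrict_le_self) hne,
      MeasureTheory.ae_restrict_mem measurableSet_Icc] with u hu hmem
    rcases eq_or_lt_of_le hmem.1 with h0 | h0
    · rw [← h0]
      simp [qfun, hapos, hlam₀, Real.zero_rpow (show ((-(1/2):ℝ)) ≠ 0 by norm_num)]
    · have h2 : u < 1/(2*lam₀) := lt_of_le_of_ne (hmem.2.trans hba) hu
      rw [hq u h0 h2]
      have hnn : 0 ≤ 1/(Real.sqrt (2*Real.pi) * C * σ₀) * u ^ (-(1/2) : ℝ) :=
        mul_nonneg hkpos.le (Real.rpow_nonneg h0.le _)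
      exact mul_le_mul_of_nonneg_right
        (Real.exp_le_exp.mpr (by nlinarith [hmem.2.trans hba])) hnn
  -- nonnegativity of g on Ioc 0 a
  have hg_nn : 0 ≤ᵐ[volume.restrict (Set.Ioc (0:ℝ) (1/(2*lam₀)))]
      (fun u => Real.exp (lam * (1/(2*lam₀))) *
        (1/(Real.sqrt (2*Real.pi) * C * σ₀) * u ^ (-(1/2) : ℝ))) := by
    filter_upwards [MeasureTheory.ae_restrict_mem measurableSet_Ioc] with u hu
    exact mul_nonneg (Real.exp_pos _).le
      (mul_nonneg hkpos.le (Real.rpow_nonneg hu.1.le _))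
  -- rewrite the integral by translation
  have hrw1 : (∫ s in t..T, Real.exp (-lam * (T - s)) * qfun C σ₀ lam₀ (s - t))
      = ∫ u in (0:ℝ)..(T - t), Real.exp (-lam * (T - t - u)) * qfun C σ₀ lam₀ u := by
    rw [show (0:ℝ) = t - t by ring,
      ← intervalIntegral.integral_comp_sub_right
        (fun u => Real.exp (-lam * (T - t - u)) * qfun C σ₀ lam₀ u) t]
    apply intervalIntegral.integral_congr
    intro s _
    simp only
    congr 2
    ring
  have hrw2 : (∫ u in (0:ℝ)..(T - t), Real.exp (-lam * (T - t - u)) * qfun C σ₀ lam₀ u)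
      = Real.exp (-lam * (T - t)) *
        ∫ u in (0:ℝ)..(T - t), Real.exp (lam * u) * qfun C σ₀ lam₀ u := by
    rw [← intervalIntegral.integral_const_mul]
    apply intervalIntegral.integral_congr
    intro u _
    simp only
    rw [show -lam * (T - t - u) = -lam * (T - t) + lam * u by ring, Real.exp_add, mul_assoc]
  rw [hrw1, hrw2]
  -- bound the J integral
  have hA := pieceA C σ₀ lam₀ lam hC hσ₀ hlam₀
  have hd : 0 < lam₀ - lam := by linarith
  have hBnn : 0 ≤ Real.exp (lam/(2*lam₀)) / (Real.sqrt Real.pi * C * σ₀) *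
      (Real.sqrt lam₀/(lam₀-lam)) := by
    have : 0 < Real.sqrt Real.pi := Real.sqrt_pos.mpr Real.pi_pos
    positivity
  have hJ : (∫ u in (0:ℝ)..(T - t), Real.exp (lam * u) * qfun C σ₀ lam₀ u)
      ≤ Real.exp (lam/(2*lam₀)) / (Real.sqrt Real.pi * C * σ₀) * (1/Real.sqrt lam₀)
        + Real.exp (lam/(2*lam₀)) / (Real.sqrt Real.pi * C * σ₀) *
          (Real.sqrt lam₀/(lam₀-lam)) := by
    rcases le_or_gt (T - t) (1/(2*lam₀)) with hτa | hτa
    · have h1 : (∫ u in (0:ℝ)..(T - t), Real.exp (lam * u) * qfun C σ₀ lam₀ u)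
          ≤ ∫ u in (0:ℝ)..(T - t), Real.exp (lam * (1/(2*lam₀))) *
            (1/(Real.sqrt (2*Real.pi) * C * σ₀) * u ^ (-(1/2) : ℝ)) :=
        intervalIntegral.integral_mono_ae_restrict hτ0 (hint_f _ hτ0 hτa) (hint_g _)
          (hle _ hτa)
      have h2 : (∫ u in (0:ℝ)..(T - t), Real.exp (lam * (1/(2*lam₀))) *
            (1/(Real.sqrt (2*Real.pi) * C * σ₀) * u ^ (-(1/2) : ℝ)))
          ≤ ∫ u in (0:ℝ)..(1/(2*lam₀)), Real.exp (lam * (1/(2*lam₀))) *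
            (1/(Real.sqrt (2*Real.pi) * C * σ₀) * u ^ (-(1/2) : ℝ)) :=
        intervalIntegral.integral_mono_interval le_rfl hτ0 hτa hg_nn (hint_g _)
      linarith [h1, h2, hA ▸ h2]
    · have hsplit : (∫ u in (0:ℝ)..(T - t), Real.exp (lam * u) * qfun C σ₀ lam₀ u)
          = (∫ u in (0:ℝ)..(1/(2*lam₀)), Real.exp (lam * u) * qfun C σ₀ lam₀ u)
            + ∫ u in (1/(2*lam₀))..(T - t), Real.exp (lam * u) * qfun C σ₀ lam₀ u := by
        rw [intervalIntegral.integral_add_adjacent_intervals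
          (hint_f _ hapos.le le_rfl) ?_]
        have hcont : Continuous (fun u : ℝ =>
            Real.exp (lam * u) * (Real.sqrt (lam₀ * Real.exp 1) /
              (Real.sqrt Real.pi * C * σ₀) * Real.exp (-lam₀ * u))) :=
          (Real.continuous_exp.comp (continuous_const.mul continuous_id)).mul
            (continuous_const.mul
              (Real.continuous_exp.comp (continuous_const.mul continuous_id)))
        refine (hcont.intervalIntegrable _ _).congr_ae ?_
        filter_upwards [MeasureTheory.ae_restrict_mem measurableSet_uIoc] with u hu
        rw [Set.uIoc_of_le hτa.le] at hu
        have : ¬ (u < 1/(2*lam₀)) := not_lt.mpr hu.1.le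
        simp only [qfun, this, if_false]
      have h1 : (∫ u in (0:ℝ)..(1/(2*lam₀)), Real.exp (lam * u) * qfun C σ₀ lam₀ u)
          ≤ Real.exp (lam/(2*lam₀)) / (Real.sqrt Real.pi * C * σ₀) * (1/Real.sqrt lam₀) := by
        rw [← hA]
        exact intervalIntegral.integral_mono_ae_restrict hapos.le
          (hint_f _ hapos.le le_rfl) (hint_g _) (hle _ le_rfl)
      have h2 := pieceB C σ₀ lam₀ lam (T - t) hC hσ₀ hlam₀ hlam hτa.le
      rw [hsplit]
      linarith
  calc Real.exp (-lam * (T - t)) *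
        ∫ u in (0:ℝ)..(T - t), Real.exp (lam * u) * qfun C σ₀ lam₀ u
      ≤ Real.exp (-lam * (T - t)) *
        (Real.exp (lam/(2*lam₀)) / (Real.sqrt Real.pi * C * σ₀) * (1/Real.sqrt lam₀)
          + Real.exp (lam/(2*lam₀)) / (Real.sqrt Real.pi * C * σ₀) *
            (Real.sqrt lam₀/(lam₀-lam))) :=
        mul_le_mul_of_nonneg_left hJ (Real.exp_pos _).le
    _ = Real.exp (-lam * (T - t)) * Real.exp (lam / (2 * lam₀)) /
          (Real.sqrt Real.pi * C * σ₀) *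
        (1 / Real.sqrt lam₀ + Real.sqrt lam₀ / (lam₀ - lam)) := by ring
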